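/- Let U ⊆ ℝ^n be open and f : U → ℝ^m be analytic. Assume that for any two distinct points x, y ∈ U the Taylor series of f at x and at y do not coincide. Then for every x₀ ∈ U there exists k ∈ ℕ such that the map T_k f := (f, df, d²f, …, d^k f) has injective differential at x₀. -/

import Mathlib

open Filter Topology

/-- An analytic function on `ℝ` whose iterated derivatives of positive order all vanish
at `0` is locally constant at `0`. -/
lemma eventually_const_of_iteratedDeriv_zero {F : Type*} [NormedAddCommGroup F]
    [NormedSpace ℝ F] [CompleteSpace F] {φ : ℝ → F} (hφ : AnalyticAt ℝ φ 0)
    (h : ∀ j, 1 ≤ j → iteratedDeriv j φ 0 = 0) : ∀ᶠ t in 𝓝 (0:ℝ), φ t = φ 0 := by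
  obtain ⟨p, r, hp⟩ := hφ
  have hpn : ∀ n, 1 ≤ n → p n = 0 := by
    intro k hk
    have h1 : (Nat.factorial k) • p k (fun _ ↦ (1:ℝ)) = iteratedFDeriv ℝ k φ 0 (fun _ ↦ 1) :=
      hp.factorial_smul 1 k
    rw [← iteratedDeriv_eq_iteratedFDeriv, h k hk] at h1
    have h2 : p k (fun _ ↦ (1:ℝ)) = 0 := by
      have hne : ((Nat.factorial k : ℕ) : ℝ) ≠ 0 := by exact_mod_cast Nat.factorial_ne_zero k
      have := h1
      rw [← Nat.cast_smul_eq_nsmul ℝ, smul_eq_zero] at this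
      tauto
    refine ContinuousMultilinearMap.ext fun v => ?_
    have hs : (p k) v = (∏ i, v i) • (p k) (fun _ ↦ (1:ℝ)) := by
      have := (p k).map_smul_univ v (fun _ ↦ (1:ℝ))
      simpa [smul_eq_mul] using this.symm
    simp [hs, h2]
  have hmem : EMetric.ball (0:ℝ) r ∈ 𝓝 (0:ℝ) := EMetric.ball_mem_nhds 0 hp.r_pos
  filter_upwards [hmem] with y hy
  have hsum := hp.hasSum (y := y) (by simpa [edist_zero_right] using (Metric.mem_eball.1 hy))
  have hsingle : HasSum (fun k => p k (fun _ : Fin k ↦ y)) (p 0 (fun _ ↦ y)) := by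
    apply hasSum_single 0
    intro b hb
    rw [hpn b (Nat.one_le_iff_ne_zero.2 hb)]
    rfl
  have := hsum.unique hsingle
  rw [zero_add] at this
  rw [this, hp.coeff_zero]

/-- If `X` is killed by the differentials at `x₀` of all iterated derivatives of an
analytic function whose Taylor series separates points, then `X = 0`. -/
lemma eq_zero_of_mem_all_jet_kernels {n m : ℕ} {U : Set (EuclideanSpace ℝ (Fin n))}
    (hU : IsOpen U) {f : EuclideanSpace ℝ (Fin n) → EuclideanSpace ℝ (Fin m)}
    (hf : AnalyticOnNhd ℝ f U)
    (hsep : ∀ x ∈ U, ∀ y ∈ U, x ≠ y →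
      ∃ k : ℕ, iteratedFDeriv ℝ k f x ≠ iteratedFDeriv ℝ k f y)
    {x₀ : EuclideanSpace ℝ (Fin n)} (hx₀ : x₀ ∈ U)
    {X : EuclideanSpace ℝ (Fin n)}
    (hX : ∀ i : ℕ, fderiv ℝ (iteratedFDeriv ℝ i f) x₀ X = 0) : X = 0 := by
  let E := EuclideanSpace ℝ (Fin n)
  let F := EuclideanSpace ℝ (Fin m)
  set L : ℝ → E := fun t => x₀ + t • X with hL
  have hLa : ∀ t : ℝ, AnalyticAt ℝ L t := fun t =>
    analyticAt_const.add ((analyticAt_id).smul analyticAt_const)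
  have hLc : Continuous L := continuous_const.add (continuous_id.smul continuous_const)
  set J : Set ℝ := L ⁻¹' U with hJ
  have hJo : IsOpen J := hU.preimage hLc
  have h0J : (0:ℝ) ∈ J := by simp [hJ, hL, hx₀]
  set φ : ∀ (k : ℕ), (Fin k → E) → ℝ → F := fun k v t => iteratedFDeriv ℝ k f (L t) v with hφ
  have hφa : ∀ k v, AnalyticOnNhd ℝ (φ k v) J := by
    intro k v t ht
    exact ((ContinuousMultilinearMap.apply ℝ (fun _ : Fin k => E) F v).analyticAt _).comp
      (((hf.iteratedFDeriv k) _ ht).comp (hLa t))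
  have hD : ∀ k v, ∀ t ∈ J, HasDerivAt (φ k v) (φ (k+1) (Fin.cons X v) t) t := by
    intro k v t ht
    have hdL : HasDerivAt L X t := by
      have h1 : HasDerivAt (fun s : ℝ => s • X) ((1:ℝ) • X) t := (hasDerivAt_id t).smul_const X
      have h1' := h1.const_add x₀
      rw [one_smul] at h1'
      exact h1'
    have hdf : HasFDerivAt (iteratedFDeriv ℝ k f)
        (fderiv ℝ (iteratedFDeriv ℝ k f) (L t)) (L t) :=
      (((hf.iteratedFDeriv k) _ ht).differentiableAt).hasFDerivAt
    have h2 : HasDerivAt (fun s => iteratedFDeriv ℝ k f (L s))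
        (fderiv ℝ (iteratedFDeriv ℝ k f) (L t) X) t := hdf.comp_hasDerivAt t hdL
    have h3 := ((ContinuousMultilinearMap.apply ℝ (fun _ : Fin k => E) F v).hasFDerivAt
      (x := iteratedFDeriv ℝ k f (L t))).comp_hasDerivAt t h2
    have e : φ (k+1) (Fin.cons X v) t = (ContinuousMultilinearMap.apply ℝ (fun _ : Fin k => E) F v)
        (fderiv ℝ (iteratedFDeriv ℝ k f) (L t) X) := by
      show iteratedFDeriv ℝ (k+1) f (L t) (Fin.cons X v) = _
      rw [iteratedFDeriv_succ_apply_left, Fin.cons_zero, Fin.tail_cons]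
      rfl
    rw [e]
    exact h3
  have hde : ∀ k v, deriv (φ k v) =ᶠ[𝓝 (0:ℝ)] φ (k+1) (Fin.cons X v) := by
    intro k v
    filter_upwards [hJo.mem_nhds h0J] with t ht
    exact (hD k v t ht).deriv
  have T : ∀ j k (v : Fin k → E), iteratedDeriv j (φ (k+1) (Fin.cons X v)) 0 = 0 := by
    intro j
    induction j with
    | zero =>
      intro k v
      simp only [iteratedDeriv_zero]
      show iteratedFDeriv ℝ (k+1) f (L 0) (Fin.cons X v) = 0
      have hL0 : L 0 = x₀ := by simp [hL]
      rw [hL0, iteratedFDeriv_succ_apply_left, Fin.cons_zero, Fin.tail_cons, hX k]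
      rfl
    | succ j ih =>
      intro k v
      rw [iteratedDeriv_succ',
        Filter.EventuallyEq.iteratedDeriv_eq j (hde (k+1) (Fin.cons X v))]
      exact ih (k+1) (Fin.cons X v)
  have hall : ∀ k v j, 1 ≤ j → iteratedDeriv j (φ k v) 0 = 0 := by
    intro k v j hj
    cases j with
    | zero => omega
    | succ j' =>
      rw [iteratedDeriv_succ', Filter.EventuallyEq.iteratedDeriv_eq j' (hde k v)]
      exact T j' k v
  have hconst : ∀ k v, ∀ᶠ t in 𝓝 (0:ℝ), φ k v t = φ k v 0 := fun k v =>
    eventually_const_of_iteratedDeriv_zero (hφa k v 0 h0J) (hall k v)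
  set J₀ : Set ℝ := connectedComponentIn J 0 with hJ₀
  have hJ₀o : IsOpen J₀ := hJo.connectedComponentIn
  have h0J₀ : (0:ℝ) ∈ J₀ := mem_connectedComponentIn h0J
  have hJ₀J : J₀ ⊆ J := connectedComponentIn_subset J 0
  have hpre : IsPreconnected J₀ := (isConnected_connectedComponentIn_iff.2 h0J).isPreconnected
  have hEq : ∀ k v, Set.EqOn (φ k v) (fun _ => φ k v 0) J₀ := fun k v =>
    AnalyticOnNhd.eqOn_of_preconnected_of_eventuallyEq
      ((hφa k v).mono hJ₀J) analyticOnNhd_const hpre h0J₀ (hconst k v)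
  obtain ⟨ε, hε, hball⟩ := Metric.mem_nhds_iff.1 (hJ₀o.mem_nhds h0J₀)
  set t : ℝ := ε/2 with htdef
  have ht0 : t ≠ 0 := by positivity
  have htJ₀ : t ∈ J₀ := by
    apply hball
    simp only [Metric.mem_ball, Real.dist_eq, sub_zero, htdef]
    rw [abs_of_pos (by positivity)]
    linarith
  by_contra hX0
  have hxy : x₀ ≠ L t := by
    intro hEq'
    have h' : x₀ + t • X = x₀ := hEq'.symm
    have : t • X = 0 := by rwa [add_eq_left] at h'
    rcases smul_eq_zero.1 this with h | h
    · exact ht0 h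
    · exact hX0 h
  obtain ⟨k, hk⟩ := hsep x₀ hx₀ (L t) (hJ₀J htJ₀) hxy
  apply hk
  refine ContinuousMultilinearMap.ext fun v => ?_
  have h1 := hEq k v htJ₀
  have hL0 : L 0 = x₀ := by simp [hL]
  simp only [hφ, hL0] at h1
  exact h1.symm

/-- Let `U ⊆ ℝ^n` be open and `f : U → ℝ^m` analytic such that the
Taylor series of `f` at any two distinct points of `U` differ. Then for every
`x₀ ∈ U` there is `k` such that the `k`-jet map `T_k f = (f, df, …, d^k f)` has
injective differential at `x₀`. -/
theorem stmt4 (n m : ℕ) (U : Set (EuclideanSpace ℝ (Fin n))) (hU : IsOpen U)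
    (f : EuclideanSpace ℝ (Fin n) → EuclideanSpace ℝ (Fin m))
    (hf : AnalyticOnNhd ℝ f U)
    (hsep : ∀ x ∈ U, ∀ y ∈ U, x ≠ y →
      ∃ k : ℕ, iteratedFDeriv ℝ k f x ≠ iteratedFDeriv ℝ k f y) :
    ∀ x₀ ∈ U, ∃ k : ℕ,
      Function.Injective (fun X : EuclideanSpace ℝ (Fin n) =>
        (fun i : Fin (k + 1) => fderiv ℝ (iteratedFDeriv ℝ (i : ℕ) f) x₀ X)) := by
  intro x₀ hx₀
  classical
  set K : ℕ → Submodule ℝ (EuclideanSpace ℝ (Fin n)) :=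
    fun i => LinearMap.ker (fderiv ℝ (iteratedFDeriv ℝ i f) x₀ : EuclideanSpace ℝ (Fin n) →ₗ[ℝ]
      (EuclideanSpace ℝ (Fin n) [×i]→L[ℝ] EuclideanSpace ℝ (Fin m))) with hK
  set W : ℕ → Submodule ℝ (EuclideanSpace ℝ (Fin n)) :=
    fun k => ⨅ i : Fin (k+1), K i with hW
  have hWle : ∀ k i, i ≤ k → W k ≤ K i := by
    intro k i hik
    have := iInf_le (fun j : Fin (k+1) => K j) ⟨i, by omega⟩
    simpa using this
  have hWanti : ∀ {k l : ℕ}, k ≤ l → W l ≤ W k := by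
    intro k l hkl
    exact le_iInf fun i => hWle l i (le_trans i.is_le hkl)
  set d : ℕ → ℕ := fun k => Module.finrank ℝ (W k) with hd
  obtain ⟨k₀, hk₀⟩ : ∃ k₀, ∀ k, d k₀ ≤ d k := by
    obtain ⟨k₀, hk₀⟩ := Nat.sInf_mem (Set.range_nonempty d)
    exact ⟨k₀, fun k => hk₀ ▸ Nat.sInf_le (Set.mem_range_self k)⟩
  have hstab : ∀ i, W k₀ ≤ K i := by
    intro i
    by_cases hik : i ≤ k₀
    · exact hWle k₀ i hik
    · have h1 : W i ≤ W k₀ := hWanti (le_of_not_ge hik)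
      have h2 : W i = W k₀ := Submodule.eq_of_le_of_finrank_le h1 (hk₀ i)
      rw [← h2]
      exact hWle i i le_rfl
  have hbot : ∀ X ∈ W k₀, X = 0 := by
    intro X hXW
    refine eq_zero_of_mem_all_jet_kernels hU hf hsep hx₀ (fun i => ?_)
    have := hstab i hXW
    simpa [hK, LinearMap.mem_ker] using this
  refine ⟨k₀, ?_⟩
  intro X Y h
  have hXY : X - Y ∈ W k₀ := by
    refine (Submodule.mem_iInf _).2 fun i => ?_
    have hi := congrFun h i
    simp only [hK, LinearMap.mem_ker, map_sub]
    rw [sub_eq_zero]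
    exact hi
  have := hbot _ hXY
  exact sub_eq_zero.1 this
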